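/- Let B ≥ 1, let r be an odd integer with 1 ≤ r ≤ 2B−1, and let G_r be the (B+1)×(B+1) matrix with entries G_r[i,j] = a_{|r+2(i+j)|} + a_{|r+2(i−j)|} for 0 ≤ i, j ≤ B. If the entry a_r is replaced by a variable α, then det(G_r) is a univariate polynomial of degree B+1 in α. -/
import Mathlib


open Polynomial

/-- In the Hankel+Toeplitz matrix `G_r = [a_{|r+2(i+j)|} + a_{|r+2(i-j)|}]`, if the
value `a_r` is replaced by a variable `α`, then `det G_r` is a univariate
polynomial of degree `B + 1` in `α`. -/
theorem stmt8 (K : Type*) [Field K] (h2 : (2 : K) ≠ 0) (B : ℕ) (hB : 1 ≤ B)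
    (r : ℕ) (hodd : Odd r) (hr1 : 1 ≤ r) (hr2 : r ≤ 2 * B - 1)
    (a : ℕ → K)
    (e : ℕ → K[X]) (he : ∀ m, e m = if m = r then X else C (a m))
    (G : Matrix (Fin (B + 1)) (Fin (B + 1)) K[X])
    (hG : ∀ i j : Fin (B + 1),
      G i j = e ((r + 2 * ((i : ℤ) + (j : ℤ))).natAbs)
            + e ((r + 2 * ((i : ℤ) - (j : ℤ))).natAbs)) :
    G.det.natDegree = B + 1 := by
  have hdege : ∀ m, (e m).natDegree ≤ 1 := by
    intro m; rw [he]; split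
    · exact natDegree_X_le
    · simp
  have hdeg : ∀ i j, (G i j).natDegree ≤ 1 := by
    intro i j
    rw [hG]
    exact (natDegree_add_le _ _).trans (max_le (hdege _) (hdege _))
  have hc1 : ∀ m, (e m).coeff 1 = if m = r then 1 else 0 := by
    intro m; rw [he]; split <;> simp
  set N : Matrix (Fin (B + 1)) (Fin (B + 1)) K := fun i j => (G i j).coeff 1 with hN
  have key1 : ∀ i j : Fin (B + 1),
      (((r : ℤ) + 2 * ((i : ℤ) + (j : ℤ))).natAbs = r) ↔ ((i : ℕ) = 0 ∧ (j : ℕ) = 0) := by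
    intro i j; omega
  have key2 : ∀ i j : Fin (B + 1),
      (((r : ℤ) + 2 * ((i : ℤ) - (j : ℤ))).natAbs = r) ↔
        ((j : ℕ) = (i : ℕ) ∨ (j : ℕ) = (i : ℕ) + r) := by
    intro i j; omega
  have hNval : ∀ i j : Fin (B + 1), N i j =
      (if (i : ℕ) = 0 ∧ (j : ℕ) = 0 then (1 : K) else 0)
      + (if (j : ℕ) = (i : ℕ) ∨ (j : ℕ) = (i : ℕ) + r then (1 : K) else 0) := by
    intro i j
    simp only [hN, hG i j, coeff_add, hc1, key1 i j, key2 i j]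
  have htri : N.BlockTriangular id := by
    intro i j hij
    have hij' : (j : ℕ) < (i : ℕ) := hij
    rw [hNval, if_neg (by omega), if_neg (by omega), add_zero]
  have hdiag : ∀ i, N i i ≠ 0 := by
    intro i
    rw [hNval, if_pos (Or.inl rfl)]
    split_ifs with h
    · intro hc; apply h2; rw [← hc]; norm_num
    · simp
  have hdetN : N.det ≠ 0 := by
    rw [Matrix.det_of_upperTriangular htri]
    exact Finset.prod_ne_zero_iff.2 fun i _ => hdiag i
  have hcard : (Finset.univ : Finset (Fin (B + 1))).card = B + 1 := by simp
  have hcoeff : G.det.coeff (B + 1) = N.det := by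
    rw [Matrix.det_apply', Matrix.det_apply', finset_sum_coeff]
    refine Finset.sum_congr rfl fun σ _ => ?_
    rw [coeff_intCast_mul]
    congr 1
    have := coeff_prod_of_natDegree_le (s := (Finset.univ : Finset (Fin (B + 1))))
      (fun i => G (σ i) i) 1 (fun p _ => hdeg _ _)
    rw [hcard, mul_one] at this
    exact this
  have hle : G.det.natDegree ≤ B + 1 := by
    rw [Matrix.det_apply']
    refine natDegree_sum_le_of_forall_le _ _ fun σ _ => ?_
    refine (natDegree_mul_le).trans ?_
    rw [natDegree_intCast, zero_add]
    refine (natDegree_prod_le _ _).trans ?_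
    calc ∑ i : Fin (B + 1), (G (σ i) i).natDegree ≤ ∑ _i : Fin (B + 1), 1 :=
          Finset.sum_le_sum fun i _ => hdeg _ _
      _ = B + 1 := by simp
  exact le_antisymm hle (le_natDegree_of_ne_zero (by rw [hcoeff]; exact hdetN))
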